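/- Let a ≥ 1, b ≥ 2, c > 0, n ≥ 1 be integers with gcd(a·b^n − c, a·b^{n+1} − c, a·b^{n+2} − c) = 1 and a·b^n − c > 0, and suppose (b+1) divides a·b^n − c; write q = (a·b^n − c)/(b+1). Then for each integer p with 0 ≤ p ≤ q, the p-Frobenius number of the triple equals b(a·b^{n+1} − c) + (q+p−1)(a·b^{n+2} − c) − (a·b^n − c). -/

import Mathlib

set_option maxHeartbeats 2000000


/-- Theorem 1, case `(b+1) ∣ (a b^n - c)`: with `q = (a b^n - c)/(b+1)`, for
`0 ≤ p ≤ q` the `p`-Frobenius number of the triple is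
`b (a b^{n+1} - c) + (q+p-1)(a b^{n+2} - c) - (a b^n - c)`. -/
theorem p_frobenius_shifted_geometric_div (a b c : ℤ) (n : ℕ)
    (ha : 1 ≤ a) (hb : 2 ≤ b) (hc : 0 < c) (hn : 1 ≤ n)
    (hpos : 0 < a * b ^ n - c)
    (hgcd : Int.gcd (Int.gcd (a * b ^ n - c) (a * b ^ (n + 1) - c))
      (a * b ^ (n + 2) - c) = 1)
    (hdvd : (b + 1) ∣ (a * b ^ n - c))
    (q : ℤ) (hq : q = (a * b ^ n - c) / (b + 1))
    (p : ℤ) (hp0 : 0 ≤ p) (hpq : p ≤ q) :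
    IsGreatest {N : ℤ |
        (Nat.card {v : ℕ × ℕ × ℕ //
          (a * b ^ n - c) * v.1 + (a * b ^ (n + 1) - c) * v.2.1
            + (a * b ^ (n + 2) - c) * v.2.2 = N} : ℤ) ≤ p}
      (b * (a * b ^ (n + 1) - c) + (q + p - 1) * (a * b ^ (n + 2) - c)
        - (a * b ^ n - c)) := by
  set A1 := a * b ^ n - c with hA1d
  set A2 := a * b ^ (n + 1) - c with hA2d
  set A3 := a * b ^ (n + 2) - c with hA3d
  have hb1 : (0:ℤ) < b + 1 := by linarith
  have hA1pos : 0 < A1 := hpos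
  have hA2eq : A2 = b * A1 + (b - 1) * c := by
    rw [hA2d, hA1d, pow_succ]; ring
  have hA3eq : A3 = b ^ 2 * A1 + (b ^ 2 - 1) * c := by
    rw [hA3d, hA1d, pow_succ, pow_succ]; ring
  have hA2pos : 0 < A2 := by nlinarith
  have hA3pos : 0 < A3 := by nlinarith
  have hA1q : A1 = (b + 1) * q := by
    obtain ⟨d, hd⟩ := hdvd
    rw [hq, hd, Int.mul_ediv_cancel_left _ (by linarith : (b:ℤ) + 1 ≠ 0)]
  have hqpos : 0 < q := by nlinarith
  have hA3ge : b * A1 ≤ A3 := by nlinarith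
  have hrel : (b + 1) * A2 = b * A1 + A3 := by rw [hA2eq, hA3eq]; ring
  have hcop : IsCoprime A1 ((b - 1) * c) := by
    rw [Int.isCoprime_iff_gcd_eq_one]
    set g := Int.gcd A1 ((b - 1) * c) with hg
    have h1 : (g:ℤ) ∣ A1 := Int.gcd_dvd_left _ _
    have h2 : (g:ℤ) ∣ (b - 1) * c := Int.gcd_dvd_right _ _
    have h3 : (g:ℤ) ∣ A2 := by
      rw [hA2eq]; exact dvd_add (h1.mul_left b) h2
    have h4 : (g:ℤ) ∣ A3 := by
      rw [hA3eq]
      refine dvd_add (h1.mul_left _) ?_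
      have : (b ^ 2 - 1) * c = (b + 1) * ((b - 1) * c) := by ring
      rw [this]; exact h2.mul_left _
    have h5 : (g:ℤ) ∣ ((Int.gcd (↑(Int.gcd A1 A2)) A3 : ℕ) : ℤ) :=
      Int.dvd_coe_gcd (Int.dvd_coe_gcd h1 h3) h4
    rw [hgcd] at h5
    have : g ∣ 1 := by exact_mod_cast h5
    exact Nat.dvd_one.mp this
  have congr_key : ∀ y z : ℤ, A2 * y + A3 * z
      = (b * y + b ^ 2 * z) * A1 + (y + (b + 1) * z) * ((b - 1) * c) := by
    intro y z; rw [hA2eq, hA3eq]; ring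
  constructor
  · -- membership: the value has at most p representations
    simp only [Set.mem_setOf_eq]
    have key : ∀ v : {v : ℕ × ℕ × ℕ //
        A1 * v.1 + A2 * v.2.1 + A3 * v.2.2 = b * A2 + (q + p - 1) * A3 - A1},
        ∃ s : ℤ, 0 ≤ s ∧ s ≤ p - 1 ∧ (v.1.2.1 : ℤ) = b + (b + 1) * s
          ∧ (v.1.2.2 : ℤ) = p - 1 - s := by
      rintro ⟨⟨x, y, z⟩, hv⟩
      simp only at hv ⊢
      have hx0 : (0:ℤ) ≤ (x:ℤ) := Int.natCast_nonneg x
      have hy0 : (0:ℤ) ≤ (y:ℤ) := Int.natCast_nonneg y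
      have hz0 : (0:ℤ) ≤ (z:ℤ) := Int.natCast_nonneg z
      have hdvd1 : A1 ∣ (b + (b + 1) * (q + p - 1) - ((y:ℤ) + (b + 1) * z)) * ((b - 1) * c) := by
        refine ⟨(x:ℤ) + 1 - b * b - b ^ 2 * (q + p - 1) + b * y + b ^ 2 * z, ?_⟩
        linear_combination congr_key b (q + p - 1) - congr_key y z - hv
      have hdvd2 : A1 ∣ (b + (b + 1) * (q + p - 1) - ((y:ℤ) + (b + 1) * z)) :=
        hcop.dvd_of_dvd_mul_right hdvd1
      obtain ⟨k', hk'⟩ := hdvd2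
      rw [hA1q] at hk'
      set s : ℤ := q + p - 1 - z - q * k' with hs
      have hy : (y:ℤ) = b + (b + 1) * s := by
        rw [hs]; linear_combination -hk'
      have hs0 : 0 ≤ s := by
        by_contra hcon
        push_neg at hcon
        have h1 : s ≤ -1 := by linarith
        have h2 : (b + 1) * s ≤ (b + 1) * (-1) :=
          mul_le_mul_of_nonneg_left h1 hb1.le
        linarith
      have hcost : A1 * x = k' * q * A3 - (1 + s * b) * A1 := by
        have hyz : A2 * y + A3 * z
            = b * A2 + s * b * A1 + (q + p - 1 - q * k') * A3 := by
          linear_combination A2 * hy + s * hrel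
        linear_combination hv - hyz
      have hk'le : k' ≤ 1 := by
        by_contra hcon
        push_neg at hcon
        have h1 : (0:ℤ) ≤ (k' - 2) * q := mul_nonneg (by linarith) hqpos.le
        nlinarith
      have hk'ge : 1 ≤ k' := by
        by_contra hcon
        push_neg at hcon
        have h1 : k' ≤ 0 := by linarith
        have h2 : k' * q * A3 ≤ 0 := by
          have := mul_nonneg hqpos.le hA3pos.le
          nlinarith
        have h3 : 0 ≤ s * b := mul_nonneg hs0 (by linarith)
        have h4 : 0 ≤ A1 * x := mul_nonneg hA1pos.le hx0
        nlinarith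
      have hk1 : k' = 1 := le_antisymm hk'le hk'ge
      refine ⟨s, hs0, ?_, hy, ?_⟩
      · rw [hk1] at hs; linarith [hz0, hs]
      · rw [hk1] at hs; linarith [hs]
    choose sf h0 h1 hy hz using key
    have hinj : Function.Injective
        (fun v : {v : ℕ × ℕ × ℕ //
          A1 * v.1 + A2 * v.2.1 + A3 * v.2.2 = b * A2 + (q + p - 1) * A3 - A1} =>
          (⟨(sf v).toNat, by have := h0 v; have := h1 v; omega⟩ : Fin p.toNat)) := by
      intro v w hvw
      simp only [Fin.mk.injEq] at hvw
      have hsf : sf v = sf w := by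
        have := h0 v; have := h1 v; have := h0 w; have := h1 w; omega
      have hyy : (v.1.2.1 : ℤ) = (w.1.2.1 : ℤ) := by rw [hy v, hy w, hsf]
      have hzz : (v.1.2.2 : ℤ) = (w.1.2.2 : ℤ) := by rw [hz v, hz w, hsf]
      have hy' : v.1.2.1 = w.1.2.1 := by exact_mod_cast hyy
      have hz' : v.1.2.2 = w.1.2.2 := by exact_mod_cast hzz
      have hx' : v.1.1 = w.1.1 := by
        have e1 := v.2
        have e2 := w.2
        have : A1 * (v.1.1 : ℤ) = A1 * (w.1.1 : ℤ) := by
          rw [hyy, hzz] at e1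
          linarith [e1, e2]
        have := mul_left_cancel₀ (ne_of_gt hA1pos) this
        exact_mod_cast this
      rcases v with ⟨⟨xv, yv, zv⟩, pv⟩
      rcases w with ⟨⟨xw, yw, zw⟩, pw⟩
      simp only [Subtype.mk.injEq, Prod.mk.injEq]
      exact ⟨hx', hy', hz'⟩
    have hle := Nat.card_le_card_of_injective _ hinj
    have hfin2 : Nat.card (Fin p.toNat) = p.toNat := by simp
    rw [hfin2] at hle
    omega
  · -- upper bound
    rintro N hN
    simp only [Set.mem_setOf_eq] at hN
    by_contra hcon
    push_neg at hcon
    -- hcon : b * A2 + (q + p - 1) * A3 - A1 < N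
    have hfin : (setOf fun v : ℕ × ℕ × ℕ =>
        A1 * v.1 + A2 * v.2.1 + A3 * v.2.2 = N).Finite := by
      apply Set.Finite.subset (Set.finite_Iic (N.toNat, N.toNat, N.toNat))
      rintro ⟨x, y, z⟩ hv
      change A1 * (x:ℤ) + A2 * (y:ℤ) + A3 * (z:ℤ) = N at hv
      have hx0 : (0:ℤ) ≤ (x:ℤ) := Int.natCast_nonneg x
      have hy0 : (0:ℤ) ≤ (y:ℤ) := Int.natCast_nonneg y
      have hz0 : (0:ℤ) ≤ (z:ℤ) := Int.natCast_nonneg z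
      have hxN : (x:ℤ) ≤ N := by nlinarith
      have hyN : (y:ℤ) ≤ N := by nlinarith
      have hzN : (z:ℤ) ≤ N := by nlinarith
      simp only [Set.mem_Iic, Prod.mk_le_mk]
      omega
    haveI hfinsub : Finite {v : ℕ × ℕ × ℕ //
        A1 * v.1 + A2 * v.2.1 + A3 * v.2.2 = N} := hfin.to_subtype
    obtain ⟨u, v0, huv⟩ := hcop
    set m' : ℤ := (v0 * N) % A1 with hm'
    have hm'0 : 0 ≤ m' := Int.emod_nonneg _ (ne_of_gt hA1pos)
    have hm'lt : m' < A1 := Int.emod_lt_of_pos _ hA1pos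
    have hNm' : A1 ∣ N - m' * ((b - 1) * c) := by
      refine ⟨N * u + (v0 * N / A1) * ((b - 1) * c), ?_⟩
      have hmd : m' = v0 * N - A1 * (v0 * N / A1) := by
        rw [hm', Int.emod_def]
      linear_combination (-N) * huv - ((b - 1) * c) * hmd
    set m0 : ℤ := m' % (b + 1) with hm0d
    set m1 : ℤ := m' / (b + 1) with hm1d
    have hm00 : 0 ≤ m0 := Int.emod_nonneg _ (by linarith)
    have hm0b : m0 ≤ b := by
      have := Int.emod_lt_of_pos m' hb1
      omega
    have hm'eq : m' = (b + 1) * m1 + m0 := by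
      rw [hm0d, hm1d]; exact (Int.mul_ediv_add_emod m' (b + 1)).symm
    have hm10 : 0 ≤ m1 := Int.ediv_nonneg hm'0 (by linarith)
    have hm1q : m1 ≤ q - 1 := by
      have h1 : (b + 1) * m1 < (b + 1) * q := by
        rw [hA1q] at hm'lt; linarith
      have := lt_of_mul_lt_mul_left h1 (by linarith : (0:ℤ) ≤ b + 1)
      linarith
    set S : ℕ → ℤ := fun i => if (i:ℤ) ≤ m1 then (i:ℤ) else (i:ℤ) - m1 - 1 with hS
    set T : ℕ → ℤ := fun i => if (i:ℤ) ≤ m1 then m1 else m1 + q with hT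
    have key2 : ∀ i : ℕ, (i:ℤ) ≤ p → ∃ w : ℕ × ℕ × ℕ,
        (A1 * w.1 + A2 * w.2.1 + A3 * w.2.2 = N)
        ∧ ((w.2.1 : ℤ) = m0 + (b + 1) * S i) ∧ ((w.2.2 : ℤ) = T i - S i) := by
      intro i hip
      have hi0 : (0:ℤ) ≤ (i:ℤ) := Int.natCast_nonneg i
      have hs0 : 0 ≤ S i := by
        rw [hS]; simp only
        split <;> omega
      have hts : S i ≤ T i := by
        rw [hS, hT]; simp only
        split <;> linarith
      have hcost : m0 * A2 + T i * A3 + S i * b * A1 ≤ b * A2 + (q + p - 1) * A3 := by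
        have hX1 : 0 ≤ (b - m0) * A2 := mul_nonneg (by linarith) hA2pos.le
        rw [hS, hT]; simp only
        split
        · rename_i hcase
          have hX2 : 0 ≤ (q + p - 1 - m1 - i) * A3 :=
            mul_nonneg (by linarith) hA3pos.le
          have hX3 : 0 ≤ (i:ℤ) * (A3 - b * A1) :=
            mul_nonneg hi0 (by linarith)
          nlinarith
        · rename_i hcase
          push_neg at hcase
          have hsi : (0:ℤ) ≤ (i:ℤ) - m1 - 1 := by omega
          have hX2 : 0 ≤ (p - (i:ℤ)) * A3 := mul_nonneg (by linarith) hA3pos.le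
          have hX3 : 0 ≤ ((i:ℤ) - m1 - 1) * (A3 - b * A1) :=
            mul_nonneg hsi (by linarith)
          nlinarith
      have hshift : (m0 + (b + 1) * T i) - m' = 0 ∨ (m0 + (b + 1) * T i) - m' = A1 := by
        rw [hT]; simp only
        split
        · left; linarith [hm'eq]
        · right; rw [hA1q]; linarith [hm'eq]
      have hd2 : A1 ∣ ((m0 + (b + 1) * T i) - m') * ((b - 1) * c) := by
        rcases hshift with h | h
        · rw [h]; simp
        · rw [h]; exact Dvd.intro _ rfl
      obtain ⟨d2, hd2'⟩ := hd2
      obtain ⟨d1, hd1⟩ := hNm'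
      have hdvdC : A1 ∣ N - (m0 * A2 + T i * A3 + S i * b * A1) := by
        refine ⟨d1 - d2 - (b * m0 + b ^ 2 * T i + S i * b), ?_⟩
        linear_combination hd1 - hd2' - congr_key m0 (T i)
      obtain ⟨x', hx'⟩ := hdvdC
      have hx'0 : 0 ≤ x' := by
        by_contra hxc
        push_neg at hxc
        have h1 : x' ≤ -1 := by linarith
        have h2 : A1 * x' ≤ A1 * (-1) := mul_le_mul_of_nonneg_left h1 hA1pos.le
        linarith
      have hy'0 : 0 ≤ m0 + (b + 1) * S i := by
        have := mul_nonneg hb1.le hs0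
        linarith
      have hz'0 : 0 ≤ T i - S i := by linarith
      refine ⟨(x'.toNat, (m0 + (b + 1) * S i).toNat, (T i - S i).toNat), ?_, ?_, ?_⟩
      · simp only
        rw [Int.toNat_of_nonneg hx'0, Int.toNat_of_nonneg hy'0, Int.toNat_of_nonneg hz'0]
        linear_combination -hx' + S i * hrel
      · simp only [Int.toNat_of_nonneg hy'0]
      · simp only [Int.toNat_of_nonneg hz'0]
    choose w hw hwy hwz using fun i : Fin (p.toNat + 1) =>
      key2 i (by have := i.2; omega)
    have hginj : Function.Injective (fun i : Fin (p.toNat + 1) =>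
        (⟨w i, hw i⟩ : {v : ℕ × ℕ × ℕ //
          A1 * v.1 + A2 * v.2.1 + A3 * v.2.2 = N})) := by
      intro i j hij
      simp only [Subtype.mk.injEq] at hij
      have hyy : m0 + (b + 1) * S i = m0 + (b + 1) * S j := by
        rw [← hwy i, ← hwy j, hij]
      have hSij : S (i:ℕ) = S (j:ℕ) := by
        have h1 : (b + 1) * S i = (b + 1) * S j := by linarith
        exact mul_left_cancel₀ (by linarith : (b:ℤ) + 1 ≠ 0) h1
      have hzz : T i - S i = T j - S j := by
        rw [← hwz i, ← hwz j, hij]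
      have hTij : T (i:ℕ) = T (j:ℕ) := by linarith [hSij]
      have : ((i:ℕ):ℤ) = ((j:ℕ):ℤ) := by
        simp only [hS, hT] at hSij hTij
        by_cases hi : ((i:ℕ):ℤ) ≤ m1 <;> by_cases hj : ((j:ℕ):ℤ) ≤ m1 <;>
          simp only [hi, hj, if_true, if_false, if_pos, if_neg, not_false_iff] at hSij hTij <;>
          omega
      have : (i:ℕ) = (j:ℕ) := by exact_mod_cast this
      exact Fin.ext this
    have hcard := Nat.card_le_card_of_injective _ hginj
    have hfin3 : Nat.card (Fin (p.toNat + 1)) = p.toNat + 1 := by simp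
    rw [hfin3] at hcard
    omega
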